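/- arXiv:2509.19355 — 6 statements merged into one kernel-verified Lean document; each statement's English description precedes it below -/
import Mathlib

section
/- Let x, r, n be integers with 0 ≤ x ≤ n−r, and let d = (d_1 ≥ … ≥ d_{n−r−x}), c = (c_1 ≥ … ≥ c_{n−r}), a = (a_1 ≥ … ≥ a_x) be partitions of nonnegative integers. Suppose c is generalized-majorized by (d, a), i.e., d_i ≥ c_{i+x} for 1 ≤ i ≤ n−r−x, ∑_{i=1}^{h_x} c_i − ∑_{i=1}^{h_x−x} d_i ≤ ∑_{i=1}^{x} a_i where h_x = min{i : d_{i−x+1} < c_i} (with conventions d_i = +∞ for i ≤ 0 and d_i = −∞ for i > n−r−x), and ∑_{i=1}^{n−r} c_i = ∑_{i=1}^{n−r−x} d_i + ∑_{i=1}^{x} a_i. Then d_i = c_{i+x} for all h_x − x + 1 ≤ i ≤ n−r−x. -/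
open Finset

noncomputable section

/-- `hIdx d g m j` is `h_j = min{i : d_{i-j+1} < g_i}`, where `d` has length `m`,
with the conventions `d_i = +∞` for `i ≤ 0` and `d_i = -∞` for `i > m`. -/
def hIdx (d g : ℕ → ℤ) (m j : ℕ) : ℕ :=
  sInf {i : ℕ | j ≤ i ∧ (m + j ≤ i ∨ d (i - j + 1) < g i)}

/-- Generalized majorization `g ≺' (d, a)`, where `g` has length `m + s`,
`d` has length `m` and `a` has length `s` (all sequences 1-indexed). -/
def GenMaj (g d a : ℕ → ℤ) (m s : ℕ) : Prop :=
  (∀ i, 1 ≤ i → i ≤ m → g (i + s) ≤ d i) ∧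
  (∀ j, 1 ≤ j → j ≤ s →
    ∑ i ∈ Icc 1 (hIdx d g m j), g i - ∑ i ∈ Icc 1 (hIdx d g m j - j), d i ≤
      ∑ i ∈ Icc 1 j, a i) ∧
  (∑ i ∈ Icc 1 (m + s), g i = ∑ i ∈ Icc 1 m, d i + ∑ i ∈ Icc 1 s, a i)

/-- Ordinary majorization `a ≺ b` for integer sequences of length `s`. -/
def Maj (a b : ℕ → ℤ) (s : ℕ) : Prop :=
  (∀ k, 1 ≤ k → k ≤ s - 1 → ∑ i ∈ Icc 1 k, a i ≤ ∑ i ∈ Icc 1 k, b i) ∧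
  ∑ i ∈ Icc 1 s, a i = ∑ i ∈ Icc 1 s, b i


/-- Lemma 1.3(1): if the partitions satisfy c ≺' (d, a) then
d_i = c_{i+x} for h_x - x + 1 ≤ i ≤ n - r - x. -/
theorem stmt0 (n r x : ℕ) (hrn : r ≤ n) (hx : x ≤ n - r)
    (d c a : ℕ → ℤ)
    (hddec : ∀ i, 1 ≤ i → i < n - r - x → d (i + 1) ≤ d i)
    (hd0 : ∀ i, 1 ≤ i → i ≤ n - r - x → 0 ≤ d i)
    (hcdec : ∀ i, 1 ≤ i → i < n - r → c (i + 1) ≤ c i)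
    (hc0 : ∀ i, 1 ≤ i → i ≤ n - r → 0 ≤ c i)
    (hadec : ∀ i, 1 ≤ i → i < x → a (i + 1) ≤ a i)
    (ha0 : ∀ i, 1 ≤ i → i ≤ x → 0 ≤ a i)
    (hmaj : GenMaj c d a (n - r - x) x) :
    ∀ i, hIdx d c (n - r - x) x - x + 1 ≤ i → i ≤ n - r - x → d i = c (i + x) := by
  obtain ⟨h1, h2, h3⟩ := hmaj
  set m := n - r - x with hm
  set h := hIdx d c m x with hh
  have hmem : h ∈ {i : ℕ | x ≤ i ∧ (m + x ≤ i ∨ d (i - x + 1) < c i)} :=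
    Nat.sInf_mem ⟨m + x, Nat.le_add_left _ _, Or.inl le_rfl⟩
  have hxh : x ≤ h := hmem.1
  have hhm : h ≤ m + x := Nat.sInf_le ⟨Nat.le_add_left _ _, Or.inl le_rfl⟩
  have hS : ∑ i ∈ Icc 1 h, c i - ∑ i ∈ Icc 1 (h - x), d i ≤ ∑ i ∈ Icc 1 x, a i := by
    rcases Nat.eq_zero_or_pos x with hx0 | hx0
    · have hsum : ∑ i ∈ Icc 1 h, c i ≤ ∑ i ∈ Icc 1 h, d i := by
        apply Finset.sum_le_sum
        intro i hi
        rw [Finset.mem_Icc] at hi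
        have := h1 i hi.1 (by omega)
        simpa [hx0] using this
      have h0 : ∑ i ∈ Icc 1 (0:ℕ), a i = 0 := by simp
      rw [hx0] at *
      simp only [Nat.sub_zero]
      linarith
    · exact h2 x hx0 le_rfl
  have hreidx : ∑ i ∈ Icc (h - x + 1) m, c (i + x) = ∑ i ∈ Icc (h + 1) (m + x), c i := by
    have hset : (Icc (h - x + 1) m).map (addRightEmbedding x) = Icc (h + 1) (m + x) := by
      rw [Finset.map_add_right_Icc]
      congr 1
      omega
    rw [← hset, Finset.sum_map]
    rfl
  have hsplit1 : ∑ i ∈ Icc 1 h, c i + ∑ i ∈ Icc (h + 1) (m + x), c i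
      = ∑ i ∈ Icc 1 (m + x), c i := by
    rw [show Icc 1 h = Ioc 0 h from rfl, Finset.Icc_add_one_left_eq_Ioc h (m+x),
      show Icc 1 (m+x) = Ioc 0 (m+x) from rfl]
    exact Finset.sum_Ioc_consecutive _ (Nat.zero_le _) hhm
  have hsplit2 : ∑ i ∈ Icc 1 (h - x), d i + ∑ i ∈ Icc (h - x + 1) m, d i
      = ∑ i ∈ Icc 1 m, d i := by
    rw [show Icc 1 (h-x) = Ioc 0 (h-x) from rfl, Finset.Icc_add_one_left_eq_Ioc (h-x) m,
      show Icc 1 m = Ioc 0 m from rfl]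
    exact Finset.sum_Ioc_consecutive _ (Nat.zero_le _) (by omega)
  have htw : ∀ i ∈ Icc (h - x + 1) m, c (i + x) ≤ d i := by
    intro i hi
    rw [Finset.mem_Icc] at hi
    exact h1 i (by omega) hi.2
  have heq : ∑ i ∈ Icc (h - x + 1) m, c (i + x) = ∑ i ∈ Icc (h - x + 1) m, d i := by
    have hle := Finset.sum_le_sum htw
    have hge : ∑ i ∈ Icc (h - x + 1) m, d i ≤ ∑ i ∈ Icc (h - x + 1) m, c (i + x) := by
      rw [hreidx]; linarith
    linarith
  have := (Finset.sum_eq_sum_iff_of_le htw).mp heq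
  intro i hi1 hi2
  exact ((this i (Finset.mem_Icc.mpr ⟨hi1, hi2⟩))).symm
end
end

section
/- Let u = (u_1 ≥ … ≥ u_p) and b = (b_1 ≥ … ≥ b_y) be decreasing sequences of integers, and let g = u ∪ b be the decreasingly ordered union (as a multiset) of the p + y integers. Then g is generalized-majorized by (u, b), i.e., g ≺' (u, b). -/
open Finset


lemma decMono (f : ℕ → ℤ) (n : ℕ) (hf : ∀ i, 1 ≤ i → i < n → f (i+1) ≤ f i) :
    ∀ a c : ℕ, 1 ≤ a → a ≤ c → c ≤ n → f c ≤ f a := by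
  intro a c ha hac hc
  induction c with
  | zero => omega
  | succ m ih =>
    rcases Nat.eq_or_lt_of_le hac with h | h
    · exact h ▸ le_rfl
    · exact le_trans (hf m (by omega) (by omega)) (ih (by omega) (by omega))

lemma countGe (f : ℕ → ℤ) (n : ℕ) (hf : ∀ i, 1 ≤ i → i < n → f (i+1) ≤ f i)
    (t : ℤ) (i : ℕ) (h1 : 1 ≤ i) (h2 : i ≤ n) (h3 : t ≤ f i) :
    i ≤ ((Icc 1 n).filter (fun k => t ≤ f k)).card := by
  have hsub : Icc 1 i ⊆ (Icc 1 n).filter (fun k => t ≤ f k) := by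
    intro k hk
    rw [mem_Icc] at hk
    rw [mem_filter, mem_Icc]
    exact ⟨⟨hk.1, by omega⟩, le_trans h3 (decMono f n hf k i hk.1 hk.2 h2)⟩
  simpa using Finset.card_le_card hsub

lemma countLe (f : ℕ → ℤ) (n : ℕ) (t : ℤ) (m : ℕ)
    (hcut : ∀ i, 1 ≤ i → i ≤ n → t ≤ f i → i ≤ m) :
    ((Icc 1 n).filter (fun k => t ≤ f k)).card ≤ m := by
  have hsub : (Icc 1 n).filter (fun k => t ≤ f k) ⊆ Icc 1 m := by
    intro k hk
    rw [mem_filter, mem_Icc] at hk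
    rw [mem_Icc]
    exact ⟨hk.1.1, hcut k hk.1.1 hk.1.2 hk.2⟩
  simpa using Finset.card_le_card hsub

lemma sumViaCount (f : ℕ → ℤ) (k : ℕ) (M T : ℤ)
    (hM : ∀ i, 1 ≤ i → i ≤ k → M ≤ f i ∧ f i ≤ T) :
    ∑ i ∈ Icc 1 k, f i =
      (k : ℤ) * M + ∑ t ∈ Icc (M+1) T, (((Icc 1 k).filter (fun i => t ≤ f i)).card : ℤ) := by
  have e1 : ∀ t : ℤ, (((Icc 1 k).filter (fun i => t ≤ f i)).card : ℤ)
      = ∑ i ∈ Icc 1 k, (if t ≤ f i then (1:ℤ) else 0) := by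
    intro t
    rw [Finset.sum_boole]
  rw [Finset.sum_congr rfl (fun t _ => e1 t), Finset.sum_comm]
  have e2 : ∀ i ∈ Icc 1 k, ∑ t ∈ Icc (M+1) T, (if t ≤ f i then (1:ℤ) else 0) = f i - M := by
    intro i hi
    rw [mem_Icc] at hi
    obtain ⟨hMi, hiT⟩ := hM i hi.1 hi.2
    rw [Finset.sum_boole]
    have : (Icc (M+1) T).filter (fun t => t ≤ f i) = Icc (M+1) (f i) := by
      ext t
      rw [mem_filter, mem_Icc, mem_Icc]
      constructor
      · rintro ⟨⟨a, _⟩, c⟩; exact ⟨a, c⟩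
      · rintro ⟨a, c⟩; exact ⟨⟨a, le_trans c hiT⟩, c⟩
    rw [this, Int.card_Icc]
    rw [Int.toNat_of_nonneg (by omega)]
    ring
  rw [Finset.sum_congr rfl e2, Finset.sum_sub_distrib, Finset.sum_const, Nat.card_Icc]
  push_cast
  ring

noncomputable section

/-- Lemma (union): if g is the decreasing rearrangement of the multiset union of the
decreasing sequences u (length p) and b (length y), then g ≺' (u, b). -/
theorem stmt2 (p y : ℕ) (u b g : ℕ → ℤ)
    (hudec : ∀ i, 1 ≤ i → i < p → u (i + 1) ≤ u i)
    (hbdec : ∀ i, 1 ≤ i → i < y → b (i + 1) ≤ b i)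
    (hgdec : ∀ i, 1 ≤ i → i < p + y → g (i + 1) ≤ g i)
    (hunion :
      Multiset.map g (Icc 1 (p + y)).val =
        Multiset.map u (Icc 1 p).val + Multiset.map b (Icc 1 y).val) :
    GenMaj g u b p y := by
  have hcnt : ∀ t : ℤ,
      ((Icc 1 (p+y)).filter (fun i => t ≤ g i)).card =
      ((Icc 1 p).filter (fun i => t ≤ u i)).card +
      ((Icc 1 y).filter (fun i => t ≤ b i)).card := by
    intro t
    have h := congrArg (Multiset.countP (fun x : ℤ => t ≤ x)) hunion
    rw [Multiset.countP_add, Multiset.countP_map, Multiset.countP_map,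
      Multiset.countP_map] at h
    exact h
  refine ⟨?_, ?_, ?_⟩
  · -- condition (1)
    intro i hi1 hip
    by_contra hlt
    push_neg at hlt
    set t := g (i + y) with ht
    have h1 : i + y ≤ ((Icc 1 (p+y)).filter (fun k => t ≤ g k)).card :=
      countGe g (p+y) hgdec t (i+y) (by omega) (by omega) le_rfl
    have h2 : ((Icc 1 p).filter (fun k => t ≤ u k)).card ≤ i - 1 := by
      apply countLe
      intro k hk1 hkp htk
      by_contra hki
      have hku : u k ≤ u i := decMono u p hudec i k hi1 (by omega) hkp
      omega
    have h3 : ((Icc 1 y).filter (fun k => t ≤ b k)).card ≤ y :=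
      countLe b y t y (fun k _ hky _ => hky)
    have := hcnt t
    omega
  · -- condition (2)
    intro j hj1 hjy
    have hne : {i : ℕ | j ≤ i ∧ (p + j ≤ i ∨ u (i - j + 1) < g i)}.Nonempty :=
      ⟨p + j, ⟨by omega, Or.inl le_rfl⟩⟩
    set h := hIdx u g p j with hhdef
    have hh1 : j ≤ h ∧ (p + j ≤ h ∨ u (h - j + 1) < g h) := Nat.sInf_mem hne
    have hle : h ≤ p + j := Nat.sInf_le ⟨by omega, Or.inl le_rfl⟩
    obtain ⟨hjh, hB⟩ := hh1
    have hhpy : h ≤ p + y := by omega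
    have hA : ∀ i', j ≤ i' → i' < h → g i' ≤ u (i' - j + 1) := by
      intro i' h1 h2
      by_contra hc
      push_neg at hc
      have : h ≤ i' := Nat.sInf_le ⟨h1, Or.inr hc⟩
      omega
    -- b j ≥ g h
    have hgbj : g h ≤ b j := by
      have h1 : h ≤ ((Icc 1 (p+y)).filter (fun k => g h ≤ g k)).card :=
        countGe g (p+y) hgdec (g h) h (by omega) hhpy le_rfl
      have h2 : ((Icc 1 p).filter (fun k => g h ≤ u k)).card ≤ h - j := by
        apply countLe
        intro i hi1 hip hti
        rcases hB with hB | hB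
        · omega
        · by_contra hgt
          have : u i ≤ u (h - j + 1) := decMono u p hudec (h-j+1) i (by omega) (by omega) hip
          omega
      have h3 := hcnt (g h)
      by_contra hc
      push_neg at hc
      have h4 : ((Icc 1 y).filter (fun k => g h ≤ b k)).card ≤ j - 1 := by
        apply countLe
        intro i hi1 hiy hti
        by_contra hgt
        have : b i ≤ b j := decMono b y hbdec j i hj1 (by omega) hiy
        omega
      omega
    -- for t > g h, the b-count is < j
    have hcb : ∀ t : ℤ, g h < t → ((Icc 1 y).filter (fun i => t ≤ b i)).card < j := by
      intro t ht
      set c := ((Icc 1 (p+y)).filter (fun i => t ≤ g i)).card with hcdef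
      have hch : c ≤ h - 1 := by
        apply countLe
        intro i hi1 hipy hti
        by_contra hgt
        have : g i ≤ g h := decMono g (p+y) hgdec h i (by omega) (by omega) hipy
        omega
      have hcnt_t := hcnt t
      rcases Nat.lt_or_ge c j with hcj | hcj
      · omega
      · have hgc : t ≤ g c := by
          by_contra hgc
          push_neg at hgc
          have : c ≤ c - 1 := by
            apply countLe
            intro i hi1 hipy hti
            by_contra hgt
            have : g i ≤ g c := decMono g (p+y) hgdec c i (by omega) (by omega) hipy
            omega
          omega
        have hcu : c - j + 1 ≤ ((Icc 1 p).filter (fun i => t ≤ u i)).card :=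
          countGe u p hudec t (c - j + 1) (by omega) (by omega)
            (le_trans hgc (hA c hcj (by omega)))
        omega
    -- sum identities
    have hsne : (Icc 1 (p+y)).Nonempty := ⟨1, mem_Icc.mpr ⟨le_rfl, by omega⟩⟩
    set M := (Icc 1 (p+y)).inf' hsne (fun i => min (g i) (min (u i) (b i))) with hMdef
    set T := (Icc 1 (p+y)).sup' hsne (fun i => max (g i) (max (u i) (b i))) with hTdef
    have hMle : ∀ i, 1 ≤ i → i ≤ p + y →
        (M ≤ g i ∧ g i ≤ T) ∧ (M ≤ u i ∧ u i ≤ T) ∧ (M ≤ b i ∧ b i ≤ T) := by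
      intro i h1 h2
      have hmem : i ∈ Icc 1 (p+y) := mem_Icc.mpr ⟨h1, h2⟩
      have h3 : M ≤ min (g i) (min (u i) (b i)) := by
        rw [hMdef]; exact Finset.inf'_le (fun i => min (g i) (min (u i) (b i))) hmem
      have h4 : max (g i) (max (u i) (b i)) ≤ T := by
        rw [hTdef]; exact Finset.le_sup' (fun i => max (g i) (max (u i) (b i))) hmem
      simp only [le_min_iff, max_le_iff] at h3 h4
      tauto
    have hsum_g := sumViaCount g h M T
      (fun i h1 h2 => ((hMle i h1 (by omega)).1))
    have hsum_u := sumViaCount u (h - j) M T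
      (fun i h1 h2 => ((hMle i h1 (by omega)).2.1))
    have hsum_b := sumViaCount b j M T
      (fun i h1 h2 => ((hMle i h1 (by omega)).2.2))
    have hkey : ∀ t ∈ Icc (M+1) T,
        ((Icc 1 h).filter (fun i => t ≤ g i)).card ≤
        ((Icc 1 (h-j)).filter (fun i => t ≤ u i)).card +
        ((Icc 1 j).filter (fun i => t ≤ b i)).card := by
      intro t _
      rcases le_or_gt t (g h) with hth | hth
      · have e1 : (Icc 1 h).filter (fun i => t ≤ g i) = Icc 1 h := by
          apply Finset.filter_eq_self.mpr
          intro i hi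
          rw [mem_Icc] at hi
          exact le_trans hth (decMono g (p+y) hgdec i h hi.1 (by omega) hhpy)
        have e2 : (Icc 1 (h-j)).filter (fun i => t ≤ u i) = Icc 1 (h-j) := by
          apply Finset.filter_eq_self.mpr
          intro i hi
          rw [mem_Icc] at hi
          have hAi := hA (i+j-1) (by omega) (by omega)
          have hrw : (i+j-1) - j + 1 = i := by omega
          rw [hrw] at hAi
          have hgh : g h ≤ g (i+j-1) := decMono g (p+y) hgdec (i+j-1) h (by omega) (by omega) hhpy
          exact le_trans hth (le_trans hgh hAi)
        have e3 : (Icc 1 j).filter (fun i => t ≤ b i) = Icc 1 j := by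
          apply Finset.filter_eq_self.mpr
          intro i hi
          rw [mem_Icc] at hi
          have : b j ≤ b i := decMono b y hbdec i j hi.1 hi.2 hjy
          omega
        rw [e1, e2, e3]
        simp only [Nat.card_Icc]
        omega
      · have h1 : ((Icc 1 h).filter (fun i => t ≤ g i)).card ≤
            ((Icc 1 (p+y)).filter (fun i => t ≤ g i)).card :=
          Finset.card_le_card (Finset.filter_subset_filter _ (Icc_subset_Icc le_rfl hhpy))
        have h2 : ((Icc 1 p).filter (fun i => t ≤ u i)).card ≤
            ((Icc 1 (h-j)).filter (fun i => t ≤ u i)).card := by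
          apply Finset.card_le_card
          intro k hk
          rw [mem_filter, mem_Icc] at hk ⊢
          refine ⟨⟨hk.1.1, ?_⟩, hk.2⟩
          rcases hB with hB | hB
          · omega
          · by_contra hgt
            have : u k ≤ u (h - j + 1) := decMono u p hudec (h-j+1) k (by omega) (by omega) hk.1.2
            have := hk.2
            omega
        have h3 : ((Icc 1 y).filter (fun i => t ≤ b i)).card ≤
            ((Icc 1 j).filter (fun i => t ≤ b i)).card := by
          apply Finset.card_le_card
          intro k hk
          rw [mem_filter, mem_Icc] at hk ⊢
          refine ⟨⟨hk.1.1, ?_⟩, hk.2⟩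
          have hk_le : k ≤ ((Icc 1 y).filter (fun i => t ≤ b i)).card :=
            countGe b y hbdec t k hk.1.1 hk.1.2 hk.2
          have := hcb t hth
          omega
        have := hcnt t
        omega
    rw [hsum_g, hsum_u, hsum_b]
    have hsum_le : ∑ t ∈ Icc (M+1) T, (((Icc 1 h).filter (fun i => t ≤ g i)).card : ℤ) ≤
        ∑ t ∈ Icc (M+1) T, (((Icc 1 (h-j)).filter (fun i => t ≤ u i)).card : ℤ) +
        ∑ t ∈ Icc (M+1) T, (((Icc 1 j).filter (fun i => t ≤ b i)).card : ℤ) := by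
      rw [← Finset.sum_add_distrib]
      apply Finset.sum_le_sum
      intro t ht
      exact_mod_cast hkey t ht
    have hcast : (h : ℤ) * M = ((h - j : ℕ) : ℤ) * M + (j : ℤ) * M := by
      have : (h : ℤ) = ((h - j : ℕ) : ℤ) + (j : ℤ) := by omega
      rw [this]; ring
    linarith [hsum_le]
  · have hk := congrArg Multiset.sum hunion
    rw [Multiset.sum_add] at hk
    rw [Finset.sum_eq_multiset_sum, Finset.sum_eq_multiset_sum, Finset.sum_eq_multiset_sum]
    exact hk
end
end

section
/- Let g, d, a, â be integer sequences with g of length m+s, d of length m, and a, â of length s. If g ≺' (d, a) (generalized majorization) and a ≺ â (ordinary majorization: partial sums of a are at most those of â, with equal total sums), then g ≺' (d, â). -/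
open Finset

noncomputable section

/-- If g ≺' (d, a) and a ≺ â, then g ≺' (d, â). -/
theorem stmt3 (m s : ℕ) (g d a ahat : ℕ → ℤ)
    (h1 : GenMaj g d a m s) (h2 : Maj a ahat s) :
    GenMaj g d ahat m s := by
  obtain ⟨h11, h12, h13⟩ := h1
  obtain ⟨h21, h22⟩ := h2
  refine ⟨h11, ?_, ?_⟩
  · intro j hj1 hjs
    have key : ∑ i ∈ Icc 1 j, a i ≤ ∑ i ∈ Icc 1 j, ahat i := by
      rcases eq_or_lt_of_le hjs with h | h
      · subst h; exact le_of_eq h22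
      · exact h21 j hj1 (Nat.le_sub_one_of_lt h)
    exact le_trans (h12 j hj1 hjs) key
  · rw [h13, h22]
end
end

section
/- Let p_1 ≤ … ≤ p_r and q_1 ≤ … ≤ q_{r+x} be nondecreasing sequences of nonnegative integers with 0 ≤ x. Then for each 1 ≤ j ≤ x−1: q_{x−j+1} + ∑_{i=1}^{r} max{p_i, q_{i+x−j+1}} − ∑_{i=1}^{r} max{p_i, q_{i+x−j}} ≥ q_{x−j} + ∑_{i=1}^{r} max{p_i, q_{i+x−j}} − ∑_{i=1}^{r} max{p_i, q_{i+x−j−1}}. -/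
open Finset

lemma max_cross {a b c d : ℤ} (hab : a ≤ b) (hcd : c ≤ d) :
    max a c + max b d ≤ max a d + max b c := by
  rcases le_total b d with h | h
  · have h1 : max b d = d := max_eq_right h
    have h2 : max a c ≤ max b c := max_le_max hab le_rfl
    have h3 : d ≤ max a d := le_max_right a d
    omega
  · have h1 : max b d = b := max_eq_left h
    have h2 : max a c ≤ max a d := max_le_max le_rfl hcd
    have h3 : b ≤ max b c := le_max_left b c
    omega

lemma sum_Icc_shift (m : ℕ) (f : ℕ → ℤ) :
    ∑ i ∈ Icc 1 (m + 1), f i = f 1 + ∑ i ∈ Icc 1 m, f (i + 1) := by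
  induction m with
  | zero => simp
  | succ n ih =>
    rw [Finset.sum_Icc_succ_top (by omega), ih, Finset.sum_Icc_succ_top (by omega)]
    ring

/-- Concavity-type inequality for the sequence of max-sums (first family, Lemma 2.1). -/
theorem stmt5 (r x : ℕ) (p q : ℕ → ℤ)
    (hp0 : ∀ i, 1 ≤ i → i ≤ r → 0 ≤ p i)
    (hpmono : ∀ i, 1 ≤ i → i < r → p i ≤ p (i + 1))
    (hq0 : ∀ i, 1 ≤ i → i ≤ r + x → 0 ≤ q i)
    (hqmono : ∀ i, 1 ≤ i → i < r + x → q i ≤ q (i + 1)) :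
    ∀ j, 1 ≤ j → j ≤ x - 1 →
      q (x - j) + ∑ i ∈ Icc 1 r, max (p i) (q (i + (x - j))) -
          ∑ i ∈ Icc 1 r, max (p i) (q (i + (x - j) - 1)) ≤
        q (x - j + 1) + ∑ i ∈ Icc 1 r, max (p i) (q (i + (x - j) + 1)) -
          ∑ i ∈ Icc 1 r, max (p i) (q (i + (x - j))) := by
  intro j hj1 hj2
  have hx2 : 2 ≤ x := by omega
  set k := x - j with hkdef
  have hk1 : 1 ≤ k := by omega
  have hkx : k < x := by omega
  -- key inequality: q k + B + B ≤ q (k+1) + A + C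
  suffices key : q k + (∑ i ∈ Icc 1 r, max (p i) (q (i + k))) +
      (∑ i ∈ Icc 1 r, max (p i) (q (i + k))) ≤
      q (k + 1) + (∑ i ∈ Icc 1 r, max (p i) (q (i + k + 1))) +
      (∑ i ∈ Icc 1 r, max (p i) (q (i + k - 1))) by
    linarith
  have hqk : q k ≤ q (k + 1) := hqmono k hk1 (by omega)
  rcases Nat.eq_zero_or_pos r with hr | hr
  · subst hr; simp [hqk]
  obtain ⟨m, rfl⟩ : ∃ m, r = m + 1 := ⟨r - 1, by omega⟩
  set u : ℕ → ℤ := fun i => max (p i) (q (i + k)) with hu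
  set v : ℕ → ℤ := fun i => max (p i) (q (i + k + 1)) with hv
  set w : ℕ → ℤ := fun i => max (p i) (q (i + k - 1)) with hw
  have hA : ∑ i ∈ Icc 1 (m + 1), v i = (∑ i ∈ Icc 1 m, v i) + v (m + 1) :=
    Finset.sum_Icc_succ_top (by omega) v
  have hB1 : ∑ i ∈ Icc 1 (m + 1), u i = (∑ i ∈ Icc 1 m, u i) + u (m + 1) :=
    Finset.sum_Icc_succ_top (by omega) u
  have hB2 : ∑ i ∈ Icc 1 (m + 1), u i = u 1 + ∑ i ∈ Icc 1 m, u (i + 1) :=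
    sum_Icc_shift m u
  have hC : ∑ i ∈ Icc 1 (m + 1), w i = w 1 + ∑ i ∈ Icc 1 m, w (i + 1) :=
    sum_Icc_shift m w
  -- termwise inequality
  have hterm : ∑ i ∈ Icc 1 m, (u i + u (i + 1)) ≤ ∑ i ∈ Icc 1 m, (v i + w (i + 1)) := by
    apply Finset.sum_le_sum
    intro i hi
    rw [Finset.mem_Icc] at hi
    have hp : p i ≤ p (i + 1) := hpmono i hi.1 (by omega)
    have hq' : q (i + k) ≤ q (i + k + 1) := hqmono (i + k) (by omega) (by omega)
    have e1 : i + 1 + k = i + k + 1 := by omega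
    have e2 : i + 1 + k - 1 = i + k := by omega
    have e3 : i + k + 1 - 1 = i + k := by omega
    have := max_cross (a := p i) (b := p (i + 1)) (c := q (i + k)) (d := q (i + k + 1)) hp hq'
    simp only [hu, hv, hw, e1, e2, e3]
    linarith
  have hsum : ∑ i ∈ Icc 1 m, (u i + u (i + 1)) =
      (∑ i ∈ Icc 1 m, u i) + ∑ i ∈ Icc 1 m, u (i + 1) := Finset.sum_add_distrib
  have hsum' : ∑ i ∈ Icc 1 m, (v i + w (i + 1)) =
      (∑ i ∈ Icc 1 m, v i) + ∑ i ∈ Icc 1 m, w (i + 1) := Finset.sum_add_distrib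
  -- bottom term
  have hbot : q k + u 1 ≤ q (k + 1) + w 1 := by
    have e1 : (1 : ℕ) + k = k + 1 := by omega
    have e2 : (1 : ℕ) + k - 1 = k := by omega
    have e3 : k + 1 - 1 = k := by omega
    simp only [hu, hw, e1, e2, e3]
    rcases le_total (p 1) (q (k + 1)) with h | h
    · have : q k ≤ max (p 1) (q k) := le_max_right _ _
      rw [max_eq_right h]; omega
    · rw [max_eq_left h, max_eq_left (le_trans hqk h)]; omega
  -- top term
  have htop : u (m + 1) ≤ v (m + 1) := by
    simp only [hu, hv]
    exact max_le_max le_rfl (hqmono (m + 1 + k) (by omega) (by omega))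
  linarith [hterm, hsum ▸ hterm]
end

section
/- Let φ_1(s) | φ_2(s) | … | φ_r(s) and γ_1(s) | … | γ_{r+x}(s) be two divisibility chains of monic polynomials over a field F, with 0 ≤ x. Then for each 1 ≤ j ≤ x−1: deg(γ_{x−j+1}) + ∑_{i=1}^{r} deg(lcm(φ_i, γ_{i+x−j+1})) − ∑_{i=1}^{r} deg(lcm(φ_i, γ_{i+x−j})) ≥ deg(γ_{x−j}) + ∑_{i=1}^{r} deg(lcm(φ_i, γ_{i+x−j})) − ∑_{i=1}^{r} deg(lcm(φ_i, γ_{i+x−j−1})). -/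
open Finset Polynomial

noncomputable section

section Aux

variable {F : Type*} [Field F] [DecidableEq F]

private lemma assoc_natDegree7 {p q : Polynomial F} (h : Associated p q) :
    p.natDegree = q.natDegree := by
  by_cases hp : p = 0
  · subst hp; rw [(associated_zero_iff_eq_zero q).mp h.symm]
  · have hq : q ≠ 0 := by
      intro hq; exact hp ((associated_zero_iff_eq_zero p).mp (hq ▸ h))
    exact le_antisymm (natDegree_le_of_dvd h.dvd hq) (natDegree_le_of_dvd h.symm.dvd hp)

private lemma lcm_deg7 {p q : Polynomial F} (hp : p ≠ 0) (hq : q ≠ 0) :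
    ((GCDMonoid.lcm p q).natDegree : ℤ) = p.natDegree + q.natDegree - (gcd p q).natDegree := by
  have h := assoc_natDegree7 (gcd_mul_lcm p q)
  have hg : gcd p q ≠ 0 := fun h0 => hp ((gcd_eq_zero_iff p q).mp h0).1
  have hl : GCDMonoid.lcm p q ≠ 0 := fun h0 =>
    (by rcases (lcm_eq_zero_iff p q).mp h0 with h|h; exacts [hp h, hq h])
  rw [natDegree_mul hg hl, natDegree_mul hp hq] at h
  omega

private lemma gcd_supermod7 {a b p q : Polynomial F} (hp : p ≠ 0) (hq : q ≠ 0)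
    (hpq : p ∣ q) (hab : a ∣ b) :
    (gcd q a).natDegree + (gcd p b).natDegree ≤ (gcd q b).natDegree + (gcd p a).natDegree := by
  have hga : gcd q a ≠ 0 := fun h0 => hq ((gcd_eq_zero_iff _ _).mp h0).1
  have hgb : gcd p b ≠ 0 := fun h0 => hp ((gcd_eq_zero_iff _ _).mp h0).1
  have hT1 : gcd q b ≠ 0 := fun h0 => hq ((gcd_eq_zero_iff _ _).mp h0).1
  have hT2 : gcd p a ≠ 0 := fun h0 => hp ((gcd_eq_zero_iff _ _).mp h0).1
  have hdvd : gcd q a * gcd p b ∣ gcd q b * gcd p a := by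
    have h1 : gcd q a * gcd p b ∣ gcd q b * p :=
      mul_dvd_mul (gcd_dvd_gcd dvd_rfl hab) (gcd_dvd_left p b)
    have h2 : gcd q a * gcd p b ∣ gcd q b * a := by
      have hh : gcd q a * gcd p b ∣ a * gcd q b :=
        mul_dvd_mul (gcd_dvd_right q a) (gcd_dvd_gcd hpq (dvd_refl b))
      calc gcd q a * gcd p b ∣ a * gcd q b := hh
        _ = gcd q b * a := mul_comm _ _
    exact ((gcd_mul_left' (gcd q b) p a).dvd_iff_dvd_right.mp (dvd_gcd h1 h2))
  have := natDegree_le_of_dvd hdvd (mul_ne_zero hT1 hT2)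
  rw [natDegree_mul hga hgb, natDegree_mul hT1 hT2] at this
  omega

/-- Monotonicity of the degree of the lcm. -/
private lemma lcm_mono7 {a b p : Polynomial F} (hp : p ≠ 0) (hb : b ≠ 0) (hab : a ∣ b) :
    ((GCDMonoid.lcm p a).natDegree : ℤ) ≤ ((GCDMonoid.lcm p b).natDegree : ℤ) := by
  have hl : GCDMonoid.lcm p b ≠ 0 := fun h0 =>
    (by rcases (lcm_eq_zero_iff p b).mp h0 with h|h; exacts [hp h, hb h])
  exact_mod_cast natDegree_le_of_dvd (lcm_dvd_lcm dvd_rfl hab) hl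

/-- The increment of the degree of the lcm is at most the increment of degrees. -/
private lemma lcm_incr_le7 {a b p : Polynomial F} (hp : p ≠ 0) (ha : a ≠ 0) (hb : b ≠ 0)
    (hab : a ∣ b) :
    ((GCDMonoid.lcm p b).natDegree : ℤ) - ((GCDMonoid.lcm p a).natDegree : ℤ) ≤
      (b.natDegree : ℤ) - a.natDegree := by
  rw [lcm_deg7 hp ha, lcm_deg7 hp hb]
  have hgb : gcd p b ≠ 0 := fun h0 => hp ((gcd_eq_zero_iff _ _).mp h0).1
  have := natDegree_le_of_dvd (gcd_dvd_gcd (dvd_refl p) hab) hgb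
  omega

/-- Supermodularity: the lcm increment is smaller for a larger first argument. -/
private lemma lcm_supermod7 {a b p q : Polynomial F} (hp : p ≠ 0) (hq : q ≠ 0)
    (ha : a ≠ 0) (hb : b ≠ 0) (hpq : p ∣ q) (hab : a ∣ b) :
    ((GCDMonoid.lcm q b).natDegree : ℤ) - ((GCDMonoid.lcm q a).natDegree : ℤ) ≤
      ((GCDMonoid.lcm p b).natDegree : ℤ) - ((GCDMonoid.lcm p a).natDegree : ℤ) := by
  rw [lcm_deg7 hq ha, lcm_deg7 hq hb, lcm_deg7 hp ha, lcm_deg7 hp hb]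
  have := gcd_supermod7 hp hq hpq hab
  omega

private lemma sum_chain7 (A B : ℕ → ℤ) (c : ℤ) (r : ℕ) (hc : 0 ≤ c) (h1 : 1 ≤ r → A 1 ≤ c)
    (h2 : ∀ i, 1 ≤ i → i < r → A (i + 1) ≤ B i) (hB : ∀ i, 1 ≤ i → i ≤ r → 0 ≤ B i) :
    ∑ i ∈ Icc 1 r, A i ≤ c + ∑ i ∈ Icc 1 r, B i := by
  rcases Nat.eq_zero_or_pos r with hr | hr
  · subst hr; simp [hc]
  -- split off the first term
  have hins : Icc 1 r = insert 1 (Icc 2 r) := by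
    ext i; simp only [Finset.mem_insert, Finset.mem_Icc]; omega
  have hsplit : ∑ i ∈ Icc 1 r, A i = A 1 + ∑ i ∈ Icc 2 r, A i := by
    rw [hins, Finset.sum_insert (by simp)]
  -- reindex the middle part
  have hmap : Icc 2 r = Finset.map ⟨fun i => i + 1, fun a b h => by simpa using h⟩ (Icc 1 (r - 1)) := by
    ext i
    simp only [Finset.mem_map, Finset.mem_Icc, Function.Embedding.coeFn_mk]
    constructor
    · intro h; exact ⟨i - 1, by omega, by show i - 1 + 1 = i; omega⟩
    · rintro ⟨m, hm, rfl⟩; show 2 ≤ m + 1 ∧ m + 1 ≤ r; omega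
  have hre : ∑ i ∈ Icc 2 r, A i = ∑ i ∈ Icc 1 (r - 1), A (i + 1) := by
    rw [hmap, Finset.sum_map]
    rfl
  have hbound : ∑ i ∈ Icc 1 (r - 1), A (i + 1) ≤ ∑ i ∈ Icc 1 (r - 1), B i := by
    apply Finset.sum_le_sum
    intro i hi
    simp only [Finset.mem_Icc] at hi
    exact h2 i hi.1 (by omega)
  have hsub : ∑ i ∈ Icc 1 (r - 1), B i ≤ ∑ i ∈ Icc 1 r, B i := by
    apply Finset.sum_le_sum_of_subset_of_nonneg
    · intro i hi; simp only [Finset.mem_Icc] at hi ⊢; omega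
    · intro i hi _; simp only [Finset.mem_Icc] at hi; exact hB i hi.1 hi.2
  calc ∑ i ∈ Icc 1 r, A i = A 1 + ∑ i ∈ Icc 1 (r - 1), A (i + 1) := by rw [hsplit, hre]
    _ ≤ c + ∑ i ∈ Icc 1 (r - 1), B i := add_le_add (h1 hr) hbound
    _ ≤ c + ∑ i ∈ Icc 1 r, B i := by linarith

end Aux

/-- Lemma 2.1 (first family): concavity-type inequality for degrees of lcm's along two
divisibility chains of monic polynomials. -/
theorem stmt7 {F : Type*} [Field F] [DecidableEq F] (r x : ℕ) (φ γ : ℕ → Polynomial F)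
    (hφm : ∀ i, 1 ≤ i → i ≤ r → (φ i).Monic)
    (hφd : ∀ i, 1 ≤ i → i < r → φ i ∣ φ (i + 1))
    (hγm : ∀ i, 1 ≤ i → i ≤ r + x → (γ i).Monic)
    (hγd : ∀ i, 1 ≤ i → i < r + x → γ i ∣ γ (i + 1)) :
    ∀ j, 1 ≤ j → j ≤ x - 1 →
      ((γ (x - j)).natDegree : ℤ) +
          ∑ i ∈ Icc 1 r, ((GCDMonoid.lcm (φ i) (γ (i + (x - j)))).natDegree : ℤ) -
          ∑ i ∈ Icc 1 r, ((GCDMonoid.lcm (φ i) (γ (i + (x - j) - 1))).natDegree : ℤ) ≤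
        ((γ (x - j + 1)).natDegree : ℤ) +
          ∑ i ∈ Icc 1 r, ((GCDMonoid.lcm (φ i) (γ (i + (x - j) + 1))).natDegree : ℤ) -
          ∑ i ∈ Icc 1 r, ((GCDMonoid.lcm (φ i) (γ (i + (x - j)))).natDegree : ℤ) := by
  intro j hj1 hj2
  set k := x - j with hk
  have hk1 : 1 ≤ k := by omega
  have hk2 : k + 1 ≤ x := by omega
  have hφ0 : ∀ i, 1 ≤ i → i ≤ r → φ i ≠ 0 := fun i h1 h2 => (hφm i h1 h2).ne_zero
  have hγ0 : ∀ i, 1 ≤ i → i ≤ r + x → γ i ≠ 0 := fun i h1 h2 => (hγm i h1 h2).ne_zero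
  have hγkd : γ k ∣ γ (k + 1) := hγd k hk1 (by omega)
  have hc0 : (0 : ℤ) ≤ ((γ (k + 1)).natDegree : ℤ) - ((γ k).natDegree : ℤ) := by
    have := natDegree_le_of_dvd hγkd (hγ0 (k + 1) (by omega) (by omega))
    omega
  have h1 : 1 ≤ r → ((GCDMonoid.lcm (φ 1) (γ (1 + k))).natDegree : ℤ) -
      ((GCDMonoid.lcm (φ 1) (γ (1 + k - 1))).natDegree : ℤ) ≤
      ((γ (k + 1)).natDegree : ℤ) - ((γ k).natDegree : ℤ) := by
    intro hr
    rw [show (1 : ℕ) + k - 1 = k from by omega, show (1 : ℕ) + k = k + 1 from by omega]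
    exact lcm_incr_le7 (hφ0 1 le_rfl (by omega)) (hγ0 k hk1 (by omega))
      (hγ0 (k + 1) (by omega) (by omega)) hγkd
  have h2 : ∀ i, 1 ≤ i → i < r →
      ((GCDMonoid.lcm (φ (i + 1)) (γ (i + 1 + k))).natDegree : ℤ) -
        ((GCDMonoid.lcm (φ (i + 1)) (γ (i + 1 + k - 1))).natDegree : ℤ) ≤
      ((GCDMonoid.lcm (φ i) (γ (i + k + 1))).natDegree : ℤ) -
        ((GCDMonoid.lcm (φ i) (γ (i + k))).natDegree : ℤ) := by
    intro i hi1 hi2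
    rw [show i + 1 + k - 1 = i + k from by omega, show i + 1 + k = i + k + 1 from by omega]
    exact lcm_supermod7 (hφ0 i hi1 (by omega)) (hφ0 (i + 1) (by omega) (by omega))
      (hγ0 (i + k) (by omega) (by omega)) (hγ0 (i + k + 1) (by omega) (by omega))
      (hφd i hi1 hi2) (hγd (i + k) (by omega) (by omega))
  have hBnn : ∀ i, 1 ≤ i → i ≤ r →
      (0 : ℤ) ≤ ((GCDMonoid.lcm (φ i) (γ (i + k + 1))).natDegree : ℤ) -
        ((GCDMonoid.lcm (φ i) (γ (i + k))).natDegree : ℤ) := by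
    intro i hi1 hi2
    have := lcm_mono7 (hφ0 i hi1 hi2) (hγ0 (i + k + 1) (by omega) (by omega))
      (hγd (i + k) (by omega) (by omega))
    omega
  have key := sum_chain7
    (fun i => ((GCDMonoid.lcm (φ i) (γ (i + k))).natDegree : ℤ) -
      ((GCDMonoid.lcm (φ i) (γ (i + k - 1))).natDegree : ℤ))
    (fun i => ((GCDMonoid.lcm (φ i) (γ (i + k + 1))).natDegree : ℤ) -
      ((GCDMonoid.lcm (φ i) (γ (i + k))).natDegree : ℤ))
    (((γ (k + 1)).natDegree : ℤ) - ((γ k).natDegree : ℤ)) r hc0 h1 h2 hBnn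
  rw [Finset.sum_sub_distrib, Finset.sum_sub_distrib] at key
  linarith

end
end

section
/- (Interlacing necessity for invariant orders at infinity under row completion.) Let R(s) ∈ F(s)^{m×n} have rank r and invariant orders at infinity p̃_1 ≤ … ≤ p̃_r. Suppose W̃(s) ∈ F(s)^{z×n} is such that [R(s); W̃(s)] has rank r + x (0 ≤ x ≤ min{z, n−r}) and invariant orders at infinity q̃_1 ≤ … ≤ q̃_{r+x}. Then q̃_i ≤ p̃_i ≤ q̃_{i+z} for all 1 ≤ i ≤ r, with the convention q̃_j = +∞ for j > r + x. -/
open Finset Polynomial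

noncomputable section

open scoped Classical

variable {F : Type*} [Field F]

/-- The natural inclusion of polynomials into rational functions. -/
def ratOf {F : Type*} [Field F] (q : Polynomial F) : RatFunc F :=
  algebraMap (Polynomial F) (RatFunc F) q

/-- A polynomial vector, viewed as a vector of rational functions. -/
def polyVec {F : Type*} [Field F] {ι : Type*} (B : ι → Polynomial F) : ι → RatFunc F :=
  fun j => ratOf (B j)

/-- The degree of a polynomial vector: the maximum of the degrees of its entries. -/
def vecDeg {F : Type*} [Field F] {ι : Type*} [Fintype ι] (B : ι → Polynomial F) : ℕ :=
  Finset.univ.sup fun j => (B j).natDegree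

/-- `B` is a polynomial basis of the subspace `V` of `ι → F(s)`. -/
def IsPolyBasisOf {F : Type*} [Field F] {ι : Type*} [Fintype ι]
    (V : Submodule (RatFunc F) (ι → RatFunc F)) {k : ℕ}
    (B : Fin k → ι → Polynomial F) : Prop :=
  LinearIndependent (RatFunc F) (fun i => polyVec (B i)) ∧
  Submodule.span (RatFunc F) (Set.range fun i => polyVec (B i)) = V

/-- `B` is a minimal (least order) polynomial basis of `V`. -/
def IsMinimalBasisOf {F : Type*} [Field F] {ι : Type*} [Fintype ι]
    (V : Submodule (RatFunc F) (ι → RatFunc F)) {k : ℕ}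
    (B : Fin k → ι → Polynomial F) : Prop :=
  IsPolyBasisOf V B ∧
  ∀ (B' : Fin k → ι → Polynomial F), IsPolyBasisOf V B' →
    ∑ i, vecDeg (B i) ≤ ∑ i, vecDeg (B' i)

/-- The multiset `c` is the multiset of minimal indices of the subspace `V`. -/
def HasMinIndices {F : Type*} [Field F] {ι : Type*} [Fintype ι]
    (V : Submodule (RatFunc F) (ι → RatFunc F)) (c : Multiset ℕ) : Prop :=
  ∃ (k : ℕ) (B : Fin k → ι → Polynomial F), IsMinimalBasisOf V B ∧
    Multiset.map (fun i => vecDeg (B i)) Finset.univ.val = c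

/-- The right null-space of a rational matrix. -/
def rightNull {F : Type*} [Field F] {ιr ιc : Type*} [Fintype ιr] [Fintype ιc]
    (R : Matrix ιr ιc (RatFunc F)) : Submodule (RatFunc F) (ιc → RatFunc F) :=
  LinearMap.ker R.mulVecLin

/-- The left null-space of a rational matrix. -/
def leftNull {F : Type*} [Field F] {ιr ιc : Type*} [Fintype ιr] [Fintype ιc]
    (R : Matrix ιr ιc (RatFunc F)) : Submodule (RatFunc F) (ιr → RatFunc F) :=
  LinearMap.ker R.transpose.mulVecLin

/-- `c` is the multiset of column minimal indices of `R`. -/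
def HasColMinIndices {F : Type*} [Field F] {ιr ιc : Type*} [Fintype ιr] [Fintype ιc]
    (R : Matrix ιr ιc (RatFunc F)) (c : Multiset ℕ) : Prop :=
  HasMinIndices (rightNull R) c

/-- `u` is the multiset of row minimal indices of `R`. -/
def HasRowMinIndices {F : Type*} [Field F] {ιr ιc : Type*} [Fintype ιr] [Fintype ιc]
    (R : Matrix ιr ιc (RatFunc F)) (u : Multiset ℕ) : Prop :=
  HasMinIndices (leftNull R) u

/-- A square polynomial matrix is unimodular if its determinant is a unit (a nonzero constant). -/
def IsUnimodular {F : Type*} [Field F] {k : Type*} [Fintype k] [DecidableEq k]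
    (U : Matrix k k (Polynomial F)) : Prop :=
  IsUnit U.det

/-- The Smith–McMillan diagonal form with invariant rational functions ε_i/ψ_i (1-indexed). -/
def smDiag {F : Type*} [Field F] (m n r : ℕ) (ε ψ : ℕ → Polynomial F) :
    Matrix (Fin m) (Fin n) (RatFunc F) :=
  Matrix.of fun i j =>
    if (i : ℕ) = (j : ℕ) ∧ (i : ℕ) < r then ratOf (ε ((i : ℕ) + 1)) / ratOf (ψ ((i : ℕ) + 1)) else 0

/-- `R` has rank `r` (implicitly) and invariant rational functions ε_1/ψ_1, …, ε_r/ψ_r: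
the ε's and ψ's form monic divisibility chains with each ε_i/ψ_i irreducible, and `R` is
unimodularly equivalent to the Smith–McMillan form. -/
def HasInvRatFns {F : Type*} [Field F] {m n : ℕ} (R : Matrix (Fin m) (Fin n) (RatFunc F))
    (r : ℕ) (ε ψ : ℕ → Polynomial F) : Prop :=
  (∀ i, 1 ≤ i → i ≤ r → (ε i).Monic ∧ (ψ i).Monic ∧ IsCoprime (ε i) (ψ i)) ∧
  (∀ i, 1 ≤ i → i < r → ε i ∣ ε (i + 1) ∧ ψ (i + 1) ∣ ψ i) ∧
  ∃ (U : Matrix (Fin m) (Fin m) (Polynomial F)) (V : Matrix (Fin n) (Fin n) (Polynomial F)),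
    IsUnimodular U ∧ IsUnimodular V ∧
    (U.map ratOf) * R * (V.map ratOf) = smDiag m n r ε ψ

/-- `P` has invariant factors η_1 | … | η_r : it is unimodularly equivalent to its
Smith normal form. -/
def HasInvFactors {F : Type*} [Field F] {m n : ℕ} (P : Matrix (Fin m) (Fin n) (Polynomial F))
    (r : ℕ) (η : ℕ → Polynomial F) : Prop :=
  (∀ i, 1 ≤ i → i ≤ r → (η i).Monic) ∧
  (∀ i, 1 ≤ i → i < r → η i ∣ η (i + 1)) ∧
  ∃ (U : Matrix (Fin m) (Fin m) (Polynomial F)) (V : Matrix (Fin n) (Fin n) (Polynomial F)),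
    IsUnimodular U ∧ IsUnimodular V ∧
    U * P * V = Matrix.of fun (i : Fin m) (j : Fin n) =>
      if (i : ℕ) = (j : ℕ) ∧ (i : ℕ) < r then η ((i : ℕ) + 1) else 0

/-- A rational function is proper if the degree of its numerator is at most that of
its denominator. -/
def IsProper {F : Type*} [Field F] (f : RatFunc F) : Prop :=
  f.num.degree ≤ f.denom.degree

/-- A square rational matrix is biproper if it is proper and has a proper inverse. -/
def IsBiproper {F : Type*} [Field F] {k : Type*} [Fintype k] [DecidableEq k]
    (B : Matrix k k (RatFunc F)) : Prop :=
  (∀ i j, IsProper (B i j)) ∧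
  ∃ C : Matrix k k (RatFunc F), (∀ i j, IsProper (C i j)) ∧ B * C = 1 ∧ C * B = 1

/-- The Smith–McMillan form at infinity `diag(s^{-q_1}, …, s^{-q_r})` padded with zeros. -/
def smInfDiag {F : Type*} [Field F] (m n r : ℕ) (q : ℕ → ℤ) :
    Matrix (Fin m) (Fin n) (RatFunc F) :=
  Matrix.of fun i j =>
    if (i : ℕ) = (j : ℕ) ∧ (i : ℕ) < r then (RatFunc.X : RatFunc F) ^ (-(q ((i : ℕ) + 1))) else 0

/-- `R` has invariant orders at infinity q_1 ≤ … ≤ q_r : it is biproperly equivalent to the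
Smith–McMillan form at infinity. -/
def HasInfOrders {F : Type*} [Field F] {m n : ℕ} (R : Matrix (Fin m) (Fin n) (RatFunc F))
    (r : ℕ) (q : ℕ → ℤ) : Prop :=
  (∀ i, 1 ≤ i → i < r → q i ≤ q (i + 1)) ∧
  ∃ (B₁ : Matrix (Fin m) (Fin m) (RatFunc F)) (B₂ : Matrix (Fin n) (Fin n) (RatFunc F)),
    IsBiproper B₁ ∧ IsBiproper B₂ ∧ B₁ * R * B₂ = smInfDiag m n r q

/-- Stacking a `z × n` block below an `m × n` matrix. -/
def stack {α : Type*} {m z n : ℕ} (R : Matrix (Fin m) (Fin n) α)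
    (W : Matrix (Fin z) (Fin n) α) : Matrix (Fin (m + z)) (Fin n) α :=
  Matrix.of fun i j =>
    if h : (i : ℕ) < m then R ⟨i, h⟩ j
    else W ⟨(i : ℕ) - m, by have := i.isLt; omega⟩ j

/-- The matrix `p(s)·R(s)` obtained by multiplying every entry of `R` by the polynomial `p`. -/
def polySmul {F : Type*} [Field F] {ιr ιc : Type*} (p : Polynomial F)
    (R : Matrix ιr ιc (RatFunc F)) : Matrix ιr ιc (RatFunc F) :=
  Matrix.of fun i j => ratOf p * R i j


set_option synthInstance.maxHeartbeats 1000000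
set_option maxHeartbeats 2000000

namespace StmtAux


lemma isProper_iff {f : RatFunc F} : IsProper f ↔ f = 0 ∨ f.intDegree ≤ 0 := by
  constructor
  · intro h
    rcases eq_or_ne f 0 with h0 | h0
    · exact Or.inl h0
    · right
      have hn : f.num ≠ 0 := RatFunc.num_ne_zero h0
      have hd : f.denom ≠ 0 := f.denom_ne_zero
      unfold IsProper at h
      rw [Polynomial.degree_eq_natDegree hn, Polynomial.degree_eq_natDegree hd] at h
      have : (f.num.natDegree : ℤ) ≤ f.denom.natDegree := by exact_mod_cast h
      simpa [RatFunc.intDegree] using this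
  · rintro (rfl | h)
    · simp [IsProper]
    · rcases eq_or_ne f 0 with h0 | h0
      · simp [IsProper, h0]
      · have hn : f.num ≠ 0 := RatFunc.num_ne_zero h0
        have hd : f.denom ≠ 0 := f.denom_ne_zero
        unfold IsProper
        rw [Polynomial.degree_eq_natDegree hn, Polynomial.degree_eq_natDegree hd]
        have : (f.num.natDegree : ℤ) ≤ f.denom.natDegree := by
          have := h; simp only [RatFunc.intDegree] at this; omega
        exact_mod_cast this

lemma isProper_zero : IsProper (0 : RatFunc F) := isProper_iff.2 (Or.inl rfl)

lemma isProper_one : IsProper (1 : RatFunc F) := isProper_iff.2 (Or.inr (by simp [RatFunc.intDegree_one]))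

lemma isProper_add {f g : RatFunc F} (hf : IsProper f) (hg : IsProper g) : IsProper (f + g) := by
  rcases eq_or_ne f 0 with rfl | hf0; · simpa
  rcases eq_or_ne g 0 with rfl | hg0; · simpa
  rcases eq_or_ne (f + g) 0 with h0 | h0
  · exact isProper_iff.2 (Or.inl h0)
  · refine isProper_iff.2 (Or.inr ?_)
    have := RatFunc.intDegree_add_le hg0 h0
    have h1 := (isProper_iff.1 hf).resolve_left hf0
    have h2 := (isProper_iff.1 hg).resolve_left hg0
    omega
  
lemma isProper_neg {f : RatFunc F} (hf : IsProper f) : IsProper (-f) := by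
  rcases eq_or_ne f 0 with rfl | hf0; · simpa
  refine isProper_iff.2 (Or.inr ?_)
  rw [RatFunc.intDegree_neg]
  exact (isProper_iff.1 hf).resolve_left hf0

lemma isProper_sub {f g : RatFunc F} (hf : IsProper f) (hg : IsProper g) : IsProper (f - g) := by
  simpa [sub_eq_add_neg] using isProper_add hf (isProper_neg hg)

lemma isProper_mul {f g : RatFunc F} (hf : IsProper f) (hg : IsProper g) : IsProper (f * g) := by
  rcases eq_or_ne f 0 with rfl | hf0; · simpa using isProper_zero
  rcases eq_or_ne g 0 with rfl | hg0; · simpa using isProper_zero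
  refine isProper_iff.2 (Or.inr ?_)
  rw [RatFunc.intDegree_mul hf0 hg0]
  have h1 := (isProper_iff.1 hf).resolve_left hf0
  have h2 := (isProper_iff.1 hg).resolve_left hg0
  omega

lemma isProper_sum {ι : Type*} (s : Finset ι) (f : ι → RatFunc F)
    (h : ∀ i ∈ s, IsProper (f i)) : IsProper (∑ i ∈ s, f i) := by
  classical
  induction s using Finset.induction_on with
  | empty => simpa using isProper_zero
  | insert _ _ hx ih =>
    rw [Finset.sum_insert hx]
    exact isProper_add (h _ (Finset.mem_insert_self _ _))
      (ih fun i hi => h i (Finset.mem_insert_of_mem hi))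

lemma isProper_prod {ι : Type*} (s : Finset ι) (f : ι → RatFunc F)
    (h : ∀ i ∈ s, IsProper (f i)) : IsProper (∏ i ∈ s, f i) := by
  classical
  induction s using Finset.induction_on with
  | empty => simpa using isProper_one
  | insert _ _ hx ih =>
    rw [Finset.prod_insert hx]
    exact isProper_mul (h _ (Finset.mem_insert_self _ _))
      (ih fun i hi => h i (Finset.mem_insert_of_mem hi))

lemma intDegree_X_zpow (d : ℤ) : ((RatFunc.X : RatFunc F) ^ d).intDegree = d := by
  have hX : (RatFunc.X : RatFunc F) ≠ 0 := RatFunc.X_ne_zero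
  have hnat : ∀ n : ℕ, ((RatFunc.X : RatFunc F) ^ (n : ℕ)).intDegree = n := by
    intro n
    induction n with
    | zero => simpa using RatFunc.intDegree_one
    | succ n ih =>
      rw [pow_succ, RatFunc.intDegree_mul (pow_ne_zero _ hX) hX, ih, RatFunc.intDegree_X]
      push_cast; ring
  rcases le_or_gt 0 d with hd | hd
  · lift d to ℕ using hd
    rw [zpow_natCast]; exact_mod_cast hnat d
  · have h1 : (RatFunc.X : RatFunc F) ^ d * RatFunc.X ^ (-d) = 1 := by
      rw [← zpow_add₀ hX]; simp
    have h2 := RatFunc.intDegree_mul (zpow_ne_zero d hX) (zpow_ne_zero (-d) hX)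
    rw [h1, RatFunc.intDegree_one] at h2
    have h3 : ((RatFunc.X : RatFunc F) ^ (-d)).intDegree = -d := by
      have : (-d).toNat = -d := by omega
      rw [← this, zpow_natCast]
      exact_mod_cast hnat (-d).toNat
    omega

lemma isProper_X_zpow {d : ℤ} : IsProper ((RatFunc.X : RatFunc F) ^ d) ↔ d ≤ 0 := by
  rw [isProper_iff, intDegree_X_zpow]
  simp [zpow_ne_zero d (RatFunc.X_ne_zero (K := F))]

/-- strictly proper -/
def Sp (f : RatFunc F) : Prop := IsProper (RatFunc.X * f)

lemma Sp.isProper {f : RatFunc F} (h : Sp f) : IsProper f := by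
  rcases eq_or_ne f 0 with rfl | h0; · exact isProper_zero
  refine isProper_iff.2 (Or.inr ?_)
  have hX : (RatFunc.X : RatFunc F) ≠ 0 := RatFunc.X_ne_zero
  have := (isProper_iff.1 h).resolve_left (mul_ne_zero hX h0)
  rw [RatFunc.intDegree_mul hX h0, RatFunc.intDegree_X] at this
  omega

lemma sp_zero : Sp (0 : RatFunc F) := by simp [Sp]; exact isProper_zero

lemma sp_add {f g : RatFunc F} (hf : Sp f) (hg : Sp g) : Sp (f + g) := by
  unfold Sp at *; rw [mul_add]; exact isProper_add hf hg

lemma sp_neg {f : RatFunc F} (hf : Sp f) : Sp (-f) := by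
  unfold Sp at *; rw [mul_neg]; exact isProper_neg hf

lemma sp_sum {ι : Type*} (s : Finset ι) (f : ι → RatFunc F)
    (h : ∀ i ∈ s, Sp (f i)) : Sp (∑ i ∈ s, f i) := by
  unfold Sp at *; rw [Finset.mul_sum]; exact isProper_sum _ _ fun i hi => h i hi

lemma sp_mul_left {f g : RatFunc F} (hf : IsProper f) (hg : Sp g) : Sp (f * g) := by
  unfold Sp at *; rw [mul_left_comm]; exact isProper_mul hf hg

lemma sp_mul_right {f g : RatFunc F} (hf : Sp f) (hg : IsProper g) : Sp (f * g) := by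
  unfold Sp at *; rw [← mul_assoc]; exact isProper_mul hf hg

lemma sp_X_zpow {d : ℤ} (hd : d < 0) : Sp ((RatFunc.X : RatFunc F) ^ d) := by
  unfold Sp
  have : (RatFunc.X : RatFunc F) * RatFunc.X ^ d = RatFunc.X ^ (d + 1) := by
    rw [add_comm, zpow_add₀ (RatFunc.X_ne_zero (K := F)), zpow_one]
  rw [this, isProper_X_zpow]; omega

/-- all entries proper -/
def MProper {a b : Type*} (M : Matrix a b (RatFunc F)) : Prop := ∀ i j, IsProper (M i j)

def MSp {a b : Type*} (M : Matrix a b (RatFunc F)) : Prop := ∀ i j, Sp (M i j)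

lemma MProper.mul {a b c : Type*} [Fintype b] {M : Matrix a b (RatFunc F)}
    {N : Matrix b c (RatFunc F)} (hM : MProper M) (hN : MProper N) : MProper (M * N) := by
  intro i j
  rw [Matrix.mul_apply]
  exact isProper_sum _ _ fun l _ => isProper_mul (hM i l) (hN l j)

lemma MProper.mul_sp {a b c : Type*} [Fintype b] {M : Matrix a b (RatFunc F)}
    {N : Matrix b c (RatFunc F)} (hM : MProper M) (hN : MSp N) : MSp (M * N) := by
  intro i j
  rw [Matrix.mul_apply]
  exact sp_sum _ _ fun l _ => sp_mul_left (hM i l) (hN l j)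

lemma MSp.mul_proper {a b c : Type*} [Fintype b] {M : Matrix a b (RatFunc F)}
    {N : Matrix b c (RatFunc F)} (hM : MSp M) (hN : MProper N) : MSp (M * N) := by
  intro i j
  rw [Matrix.mul_apply]
  exact sp_sum _ _ fun l _ => sp_mul_right (hM i l) (hN l j)

lemma MSp.isProper {a b : Type*} {M : Matrix a b (RatFunc F)} (h : MSp M) : MProper M :=
  fun i j => (h i j).isProper

/-- determinant of a matrix with proper entries and one strictly proper row is strictly proper -/
lemma sp_det {k : ℕ} (M : Matrix (Fin k) (Fin k) (RatFunc F)) (hM : MProper M)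
    (i₀ : Fin k) (hrow : ∀ j, Sp (M i₀ j)) : Sp M.det := by
  rw [Matrix.det_apply]
  refine sp_sum _ _ fun σ _ => ?_
  have hprod : Sp (∏ i, M (σ i) i) := by
    have hmem : (σ⁻¹ i₀ : Fin k) ∈ Finset.univ := Finset.mem_univ _
    rw [← Finset.mul_prod_erase Finset.univ _ hmem]
    refine sp_mul_right ?_ (isProper_prod _ _ fun l _ => hM _ _)
    have : σ (σ⁻¹ i₀) = i₀ := Equiv.apply_symm_apply σ i₀
    rw [this]
    exact hrow _
  rcases Int.units_eq_one_or (Equiv.Perm.sign σ) with h | h <;> rw [h]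
  · simpa using hprod
  · simpa using sp_neg hprod

lemma aux_dep {K V : Type*} [Field K] [AddCommGroup V] [Module K V]
    {ι κ : Type*} [Fintype ι] [Fintype κ] (v : ι → V) (g : κ → V)
    (hv : ∀ i, v i ∈ Submodule.span K (Set.range g))
    (h : Fintype.card κ < Fintype.card ι) :
    ∃ w : ι → K, (∑ i, w i • v i = 0) ∧ ∃ i, w i ≠ 0 := by
  rw [← Fintype.not_linearIndependent_iff]
  intro hli
  have hfd : FiniteDimensional K (Submodule.span K (Set.range g)) :=
    FiniteDimensional.span_of_finite K (Set.finite_range g)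
  set W := Submodule.span K (Set.range g)
  have hli' : LinearIndependent K (fun i => (⟨v i, hv i⟩ : W)) := by
    have : v = (W.subtype ∘ fun i => (⟨v i, hv i⟩ : W)) := by funext i; rfl
    rw [this] at hli
    exact hli.of_comp W.subtype
  have h1 : Fintype.card ι ≤ Module.finrank K W := hli'.fintype_card_le_finrank
  have h2 : Module.finrank K W ≤ Fintype.card κ := by
    have := finrank_span_le_card (R := K) (Set.range g)
    refine le_trans this ?_
    rw [Set.toFinset_range]
    exact le_trans (Finset.card_image_le) (by simp)
  omega

/-- Core lemma -/
lemma sum_dite_zero {α β : Type*} [Fintype α] [AddCommMonoid β] (s : Finset α)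
    (f : ↥s → β) : ∑ i : α, (if h : i ∈ s then f ⟨i, h⟩ else 0) = ∑ i : ↥s, f i := by
  classical
  rw [← Finset.sum_subset (Finset.subset_univ s)
    (by intro x _ hx; rw [dif_neg hx])]
  rw [← Finset.sum_attach s (fun i => if h : i ∈ s then f ⟨i, h⟩ else 0)]
  refine Finset.sum_congr rfl fun i _ => ?_
  rw [dif_pos i.2]

set_option synthInstance.maxHeartbeats 1000000 in
lemma core {k : ℕ} {ι : Type*} [Fintype ι] (T P B : Matrix (Fin k) (Fin k) (RatFunc F))
    (hTPB : T = P + B) (hP : MProper P) (hB : MSp B)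
    (g : ι → (Fin k → RatFunc F))
    (hg : ∀ i, P i ∈ Submodule.span (RatFunc F) (Set.range g))
    (hcard : Fintype.card ι < k) : Sp T.det := by
  have hTf : T = fun i => (P : Fin k → Fin k → RatFunc F) i + B i := by
    funext i j; rw [hTPB]; simp [Matrix.add_apply]
  have hdet : T.det = (Matrix.detRowAlternating (R := RatFunc F) (n := Fin k)).toMultilinearMap
      ((P : Fin k → Fin k → RatFunc F) + B) := by
    rw [hTf]; rfl
  rw [hdet]; erw [MultilinearMap.map_add_univ]
  refine sp_sum _ _ fun s _ => ?_
  have hterm : (Matrix.detRowAlternating (R := RatFunc F) (n := Fin k)).toMultilinearMap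
      (s.piecewise P B) = Matrix.det (Matrix.of (s.piecewise (P : Fin k → Fin k → RatFunc F) B)) := rfl
  rw [hterm]
  set M : Matrix (Fin k) (Fin k) (RatFunc F) := Matrix.of (s.piecewise (P : Fin k → Fin k → RatFunc F) B) with hMdef
  have hMrow_in : ∀ i ∈ s, M i = P i := fun i hi => Finset.piecewise_eq_of_mem _ _ _ hi
  have hMrow_out : ∀ i ∉ s, M i = B i := fun i hi => Finset.piecewise_eq_of_notMem _ _ _ hi
  rcases lt_or_ge (Fintype.card ι) s.card with hbig | hsmall
  · -- too many P-rows: determinant vanishes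
    obtain ⟨w', hw'sum, i₁, hw'⟩ := aux_dep (fun i : ↥s => P i) g (fun i => hg _)
      (by simpa using hbig)
    have hdet0 : M.det = 0 := by
      rw [← Matrix.exists_vecMul_eq_zero_iff]
      refine ⟨fun i => if h : i ∈ s then w' ⟨i, h⟩ else 0, ?_, ?_⟩
      · intro h0
        apply hw'
        have := congrFun h0 (i₁ : Fin k)
        simpa [i₁.2] using this
      · funext j
        rw [Matrix.vecMul, dotProduct]
        have : ∀ i : Fin k, (if h : i ∈ s then w' ⟨i, h⟩ else 0) * M i j
            = if h : i ∈ s then w' ⟨i, h⟩ * P i j else 0 := by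
          intro i
          by_cases h : i ∈ s
          · simp [h, hMrow_in i h]
          · simp [h]
        rw [Finset.sum_congr rfl fun i _ => this i]
        have hrw : (∑ i : Fin k, if h : i ∈ s then w' ⟨i, h⟩ * P i j else 0)
            = ∑ i : ↥s, w' i * P (i : Fin k) j := by
          rw [← sum_dite_zero s (fun i => w' i * P (i : Fin k) j)]
          exact Finset.sum_congr rfl fun i _ => by congr!
        rw [hrw]
        have h2 := congrFun hw'sum j
        simpa using h2
    rw [hdet0]; exact sp_zero
  · -- some B-row present: determinant strictly proper
    have hex : ∃ i₀, i₀ ∉ s := by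
      by_contra hall
      push_neg at hall
      have : s = Finset.univ := Finset.eq_univ_iff_forall.2 hall
      rw [this] at hsmall
      simp [Finset.card_univ] at hsmall
      omega
    obtain ⟨i₀, hi₀⟩ := hex
    refine sp_det M ?_ i₀ ?_
    · intro i j
      by_cases h : i ∈ s
      · rw [show M i j = P i j from congrFun (hMrow_in i h) j]; exact hP i j
      · rw [show M i j = B i j from congrFun (hMrow_out i h) j]; exact (hB i j).isProper
    · intro j
      rw [show M i₀ j = B i₀ j from congrFun (hMrow_out i₀ hi₀) j]
      exact hB i₀ j

lemma not_isProper_X : ¬ IsProper (RatFunc.X : RatFunc F) := by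
  intro h
  have : IsProper ((RatFunc.X : RatFunc F) ^ (1 : ℤ)) := by rwa [zpow_one]
  rw [isProper_X_zpow] at this
  omega

lemma mproper_one {k : Type*} [Fintype k] [DecidableEq k] :
    MProper (1 : Matrix k k (RatFunc F)) := by
  intro i j
  by_cases h : i = j
  · subst h; simp [Matrix.one_apply]; exact isProper_one
  · simp [Matrix.one_apply, h]; exact isProper_zero

/-- witness of `k` independent "orders ≤ c" directions -/
def Wit (c : ℤ) (k : ℕ) {m n : ℕ} (A : Matrix (Fin m) (Fin n) (RatFunc F)) : Prop :=
  ∃ (V : Matrix (Fin k) (Fin m) (RatFunc F)) (U : Matrix (Fin n) (Fin k) (RatFunc F)),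
    MProper V ∧ MProper U ∧
    MProper (((RatFunc.X : RatFunc F) ^ c) • (V * A * U)) ∧
    ¬ IsProper (RatFunc.X * (((RatFunc.X : RatFunc F) ^ c) • (V * A * U)).det)

lemma wit_absorb {c : ℤ} {k m n m' n' : ℕ} {A : Matrix (Fin m) (Fin n) (RatFunc F)}
    {L : Matrix (Fin m') (Fin m) (RatFunc F)} {Rt : Matrix (Fin n) (Fin n') (RatFunc F)}
    (hL : MProper L) (hRt : MProper Rt)
    (h : Wit c k (L * A * Rt)) : Wit c k A := by
  obtain ⟨V, U, hV, hU, hT, hdet⟩ := h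
  refine ⟨V * L, Rt * U, hV.mul hL, hRt.mul hU, ?_, ?_⟩
  · have : V * L * A * (Rt * U) = V * (L * A * Rt) * U := by
      simp only [Matrix.mul_assoc]
    rwa [this]
  · have : V * L * A * (Rt * U) = V * (L * A * Rt) * U := by
      simp only [Matrix.mul_assoc]
    rwa [this]

/-- Lemma A : diag matrices with k small orders admit witnesses -/
lemma wit_diag {c : ℤ} {k m n r' : ℕ} (q : ℕ → ℤ)
    (hkr : k ≤ r') (hkm : r' ≤ m) (hkn : r' ≤ n)
    (hq : ∀ a : ℕ, 1 ≤ a → a ≤ k → q a ≤ c) :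
    Wit c k (smInfDiag (F := F) m n r' q) := by
  have hkm' : k ≤ m := le_trans hkr hkm
  have hkn' : k ≤ n := le_trans hkr hkn
  set D := smInfDiag (F := F) m n r' q with hD
  set V : Matrix (Fin k) (Fin m) (RatFunc F) :=
    Matrix.of (fun a i => if (i : ℕ) = (a : ℕ) then 1 else 0) with hV
  set U : Matrix (Fin n) (Fin k) (RatFunc F) :=
    Matrix.of (fun j b => if (j : ℕ) = (b : ℕ)
      then (RatFunc.X : RatFunc F) ^ ((q ((b : ℕ) + 1)) - c) else 0) with hU
  have hVp : MProper V := by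
    intro a i; by_cases h : (i : ℕ) = (a : ℕ) <;> simp [hV, h]
    exacts [isProper_one, isProper_zero]
  have hUp : MProper U := by
    intro j b
    by_cases h : (j : ℕ) = (b : ℕ) <;> simp [hU, h]
    · rw [isProper_X_zpow]
      have := hq ((b : ℕ) + 1) (by omega) (by omega)
      omega
    · exact isProper_zero
  have key : ((RatFunc.X : RatFunc F) ^ c) • (V * D * U) = 1 := by
    ext a b
    have hVD : (V * D) a = fun j => D ⟨(a : ℕ), lt_of_lt_of_le a.isLt hkm'⟩ j := by
      funext j
      rw [Matrix.mul_apply]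
      rw [Fintype.sum_eq_single (⟨(a : ℕ), lt_of_lt_of_le a.isLt hkm'⟩ : Fin m)]
      · simp [hV]
      · intro i hi
        have : (i : ℕ) ≠ (a : ℕ) := by
          intro hh; apply hi; apply Fin.ext; exact hh
        simp [hV, this]
    have hVDU : (V * D * U) a b
        = D ⟨(a : ℕ), lt_of_lt_of_le a.isLt hkm'⟩ ⟨(b : ℕ), lt_of_lt_of_le b.isLt hkn'⟩
          * (RatFunc.X : RatFunc F) ^ ((q ((b : ℕ) + 1)) - c) := by
      rw [Matrix.mul_apply]
      rw [Fintype.sum_eq_single (⟨(b : ℕ), lt_of_lt_of_le b.isLt hkn'⟩ : Fin n)]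
      · rw [hVD]; simp [hU]
      · intro j hj
        have : (j : ℕ) ≠ (b : ℕ) := by
          intro hh; apply hj; apply Fin.ext; exact hh
        simp [hU, this]
    rw [Matrix.smul_apply, hVDU]
    by_cases hab : (a : ℕ) = (b : ℕ)
    · have : D ⟨(a : ℕ), lt_of_lt_of_le a.isLt hkm'⟩ ⟨(b : ℕ), lt_of_lt_of_le b.isLt hkn'⟩ = (RatFunc.X : RatFunc F) ^ (-(q ((a : ℕ) + 1))) := by
        simp [hD, smInfDiag, hab]
        intro hh; exfalso; omega
      rw [this, hab]
      rw [smul_eq_mul, ← zpow_add₀ (RatFunc.X_ne_zero (K := F)),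
        ← zpow_add₀ (RatFunc.X_ne_zero (K := F))]
      have h1 : c + (-(q ((b : ℕ) + 1)) + (q ((b : ℕ) + 1) - c)) = 0 := by ring
      rw [h1, zpow_zero, Matrix.one_apply, if_pos (Fin.ext hab)]
    · have : D ⟨(a : ℕ), lt_of_lt_of_le a.isLt hkm'⟩ ⟨(b : ℕ), lt_of_lt_of_le b.isLt hkn'⟩ = 0 := by
        simp [hD, smInfDiag]
        intro hh; exfalso; exact hab hh
      rw [this, zero_mul, smul_zero, Matrix.one_apply,
        if_neg (fun hh => hab (by rw [hh]))]
  refine ⟨V, U, hVp, hUp, ?_, ?_⟩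
  · rw [key]; exact mproper_one
  · rw [key, Matrix.det_one, mul_one]; exact not_isProper_X

namespace WB

lemma row_mul {a b k : ℕ} (M : Matrix (Fin a) (Fin b) (RatFunc F))
    (N : Matrix (Fin b) (Fin k) (RatFunc F)) (i : Fin a) :
    (M * N) i = ∑ l, M i l • N l := by
  funext j
  rw [Matrix.mul_apply, Finset.sum_apply]
  simp [smul_eq_mul]

end WB

lemma witness_bound {m z n r' k : ℕ} {c : ℤ}
    (R : Matrix (Fin m) (Fin n) (RatFunc F)) (W : Matrix (Fin z) (Fin n) (RatFunc F))
    (q : ℕ → ℤ) (hord : HasInfOrders R r' q) (hw : Wit c k (stack R W)) :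
    k ≤ (Finset.univ.filter (fun l : Fin m => (l : ℕ) < r' ∧ q ((l : ℕ) + 1) ≤ c)).card + z := by
  classical
  obtain ⟨-, B₁, B₂, hb₁, hb₂, heq⟩ := hord
  obtain ⟨hB₁p, C₁, hC₁p, hB₁C₁, hC₁B₁⟩ := hb₁
  obtain ⟨hB₂p, C₂, hC₂p, hB₂C₂, hC₂B₂⟩ := hb₂
  set D : Matrix (Fin m) (Fin n) (RatFunc F) := smInfDiag m n r' q with hD
  have hR : R = C₁ * D * C₂ := by
    have h1 : C₁ * (B₁ * R * B₂) * C₂ = C₁ * D * C₂ := by rw [heq]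
    calc R = (C₁ * B₁) * R * (B₂ * C₂) := by rw [hC₁B₁, hB₂C₂, Matrix.one_mul, Matrix.mul_one]
    _ = C₁ * (B₁ * R * B₂) * C₂ := by simp only [Matrix.mul_assoc]
    _ = C₁ * D * C₂ := h1
  obtain ⟨V, U, hV, hU, hTp, hTdet⟩ := hw
  set S : Finset (Fin m) :=
    Finset.univ.filter (fun l : Fin m => (l : ℕ) < r' ∧ q ((l : ℕ) + 1) ≤ c) with hS
  by_contra hcon
  push_neg at hcon
  -- split V
  set Vr : Matrix (Fin k) (Fin m) (RatFunc F) :=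
    Matrix.of (fun a i => V a (Fin.castAdd z i)) with hVr
  set Vw : Matrix (Fin k) (Fin z) (RatFunc F) :=
    Matrix.of (fun a j => V a (Fin.natAdd m j)) with hVw
  have hsplit : V * stack R W = Vr * R + Vw * W := by
    ext a j
    rw [Matrix.mul_apply, Matrix.add_apply, Matrix.mul_apply, Matrix.mul_apply]
    rw [Fin.sum_univ_add (f := fun l : Fin (m + z) => V a l * stack R W l j)]
    congr 1
    · refine Finset.sum_congr rfl fun i _ => ?_
      have h1 : ((Fin.castAdd z i : Fin (m + z)) : ℕ) < m := by simp [i.isLt]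
      have h2 : stack R W (Fin.castAdd z i) j = R i j := by
        rw [stack, Matrix.of_apply, dif_pos h1]
        congr 1
      rw [h2]; rfl
    · refine Finset.sum_congr rfl fun i _ => ?_
      have h1 : ¬ ((Fin.natAdd m i : Fin (m + z)) : ℕ) < m := by simp
      have h2 : stack R W (Fin.natAdd m i) j = W i j := by
        rw [stack, Matrix.of_apply, dif_neg h1]
        congr 1
        simp
      rw [h2]; rfl
  set V'' : Matrix (Fin k) (Fin m) (RatFunc F) := Vr * C₁ with hV''
  set U'' : Matrix (Fin n) (Fin k) (RatFunc F) := C₂ * U with hU''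
  have hV''p : MProper V'' := by
    refine MProper.mul (fun a i => ?_) hC₁p
    exact hV a _
  have hU''p : MProper U'' := MProper.mul hC₂p hU
  have hVwp : MProper Vw := fun a j => hV a _
  -- split D
  set DS : Matrix (Fin m) (Fin n) (RatFunc F) := Matrix.of fun i j =>
    if (i : ℕ) = (j : ℕ) ∧ (i : ℕ) < r' ∧ q ((i : ℕ) + 1) ≤ c
    then (RatFunc.X : RatFunc F) ^ (-(q ((i : ℕ) + 1))) else 0 with hDS
  set DB : Matrix (Fin m) (Fin n) (RatFunc F) := Matrix.of fun i j =>
    if (i : ℕ) = (j : ℕ) ∧ (i : ℕ) < r' ∧ c < q ((i : ℕ) + 1)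
    then (RatFunc.X : RatFunc F) ^ (-(q ((i : ℕ) + 1))) else 0 with hDB
  have hDsum : D = DS + DB := by
    ext i j
    rw [hD, smInfDiag, Matrix.add_apply, hDS, hDB]
    simp only [Matrix.of_apply]
    rcases le_or_gt (q ((i : ℕ) + 1)) c with h | h
    · by_cases h2 : (i : ℕ) = (j : ℕ) ∧ (i : ℕ) < r'
      · rw [if_pos h2, if_pos ⟨h2.1, h2.2, h⟩, if_neg (by rintro ⟨-, -, hh⟩; omega), add_zero]
      · rw [if_neg h2, if_neg (by rintro ⟨h3, h4, -⟩; exact h2 ⟨h3, h4⟩),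
          if_neg (by rintro ⟨h3, h4, -⟩; exact h2 ⟨h3, h4⟩), add_zero]
    · by_cases h2 : (i : ℕ) = (j : ℕ) ∧ (i : ℕ) < r'
      · rw [if_pos h2, if_neg (by rintro ⟨-, -, hh⟩; omega), if_pos ⟨h2.1, h2.2, h⟩, zero_add]
      · rw [if_neg h2, if_neg (by rintro ⟨h3, h4, -⟩; exact h2 ⟨h3, h4⟩),
          if_neg (by rintro ⟨h3, h4, -⟩; exact h2 ⟨h3, h4⟩), add_zero]
  set T : Matrix (Fin k) (Fin k) (RatFunc F) :=
    ((RatFunc.X : RatFunc F) ^ c) • (V * stack R W * U) with hT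
  set Bm : Matrix (Fin k) (Fin k) (RatFunc F) :=
    V'' * (((RatFunc.X : RatFunc F) ^ c) • DB) * U'' with hBm
  set P' : Matrix (Fin k) (Fin k) (RatFunc F) :=
    V'' * (((RatFunc.X : RatFunc F) ^ c) • DS) * U''
      + Vw * (((RatFunc.X : RatFunc F) ^ c) • (W * U)) with hP'
  have hTeq : T = P' + Bm := by
    rw [hT, hP', hBm]
    have h1 : V * stack R W * U = V'' * D * U'' + Vw * (W * U) := by
      rw [hsplit, Matrix.add_mul, hR, hV'', hU'']
      simp only [Matrix.mul_assoc]
    rw [h1, hDsum]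
    simp only [Matrix.mul_add, Matrix.add_mul, smul_add, Matrix.mul_smul, Matrix.smul_mul]
    abel
  have hBmsp : MSp Bm := by
    have hDBsp : MSp (((RatFunc.X : RatFunc F) ^ c) • DB) := by
      intro i j
      rw [Matrix.smul_apply, hDB, Matrix.of_apply]
      by_cases h2 : (i : ℕ) = (j : ℕ) ∧ (i : ℕ) < r' ∧ c < q ((i : ℕ) + 1)
      · rw [if_pos h2, smul_eq_mul, ← zpow_add₀ (RatFunc.X_ne_zero (K := F))]
        exact sp_X_zpow (by omega)
      · rw [if_neg h2, smul_zero]; exact sp_zero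
    exact (hV''p.mul_sp hDBsp).mul_proper hU''p
  have hP'p : MProper P' := by
    intro i j
    have : P' i j = T i j - Bm i j := by rw [hTeq, Matrix.add_apply]; ring
    rw [this]
    exact isProper_sub (hTp i j) ((hBmsp i j).isProper)
  -- rows of P' lie in a span of S.card + z vectors
  set g : (↥S ⊕ Fin z) → (Fin k → RatFunc F) :=
    Sum.elim (fun l => ((((RatFunc.X : RatFunc F) ^ c) • DS) * U'') (l : Fin m))
      (fun j => (((RatFunc.X : RatFunc F) ^ c) • (W * U)) j) with hg
  have hrows : ∀ i, P' i ∈ Submodule.span (RatFunc F) (Set.range g) := by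
    intro i
    have hPi : P' i = (V'' * ((((RatFunc.X : RatFunc F) ^ c) • DS) * U'')) i
        + (Vw * (((RatFunc.X : RatFunc F) ^ c) • (W * U))) i := by
      rw [hP']
      funext j
      rw [Matrix.add_apply]
      congr 2
      rw [Matrix.mul_assoc]
    rw [hPi]
    refine Submodule.add_mem _ ?_ ?_
    · rw [WB.row_mul]
      refine Submodule.sum_mem _ fun l _ => ?_
      by_cases hl : l ∈ S
      · exact Submodule.smul_mem _ _ (Submodule.subset_span ⟨Sum.inl ⟨l, hl⟩, rfl⟩)
      · have hzero : ((((RatFunc.X : RatFunc F) ^ c) • DS) * U'') l = 0 := by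
          funext b
          rw [Matrix.mul_apply]
          refine Finset.sum_eq_zero fun j _ => ?_
          have : DS l j = 0 := by
            rw [hDS, Matrix.of_apply, if_neg]
            rintro ⟨-, h4, h5⟩
            exact hl (by rw [hS]; simp [h4, h5])
          rw [Matrix.smul_apply, this, smul_zero, zero_mul]
        rw [hzero, smul_zero]
        exact Submodule.zero_mem _
    · rw [WB.row_mul]
      refine Submodule.sum_mem _ fun j _ => ?_
      exact Submodule.smul_mem _ _ (Submodule.subset_span ⟨Sum.inr j, rfl⟩)
  have hcard : Fintype.card (↥S ⊕ Fin z) < k := by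
    rw [Fintype.card_sum, Fintype.card_coe, Fintype.card_fin]
    omega
  have := core T P' Bm hTeq hP'p hBmsp g hrows hcard
  exact hTdet this

lemma mono_chain {r' : ℕ} {q : ℕ → ℤ} (h : ∀ i, 1 ≤ i → i < r' → q i ≤ q (i + 1))
    {a b : ℕ} (h1 : 1 ≤ a) (hab : a ≤ b) (hb : b ≤ r') : q a ≤ q b := by
  induction b with
  | zero => omega
  | succ b ih =>
    rcases Nat.eq_or_lt_of_le hab with h2 | h2
    · exact le_of_eq (by rw [h2])
    · have hab' : a ≤ b := by omega
      exact le_trans (ih hab' (by omega)) (h b (by omega) (by omega))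

lemma wit_of_orders {c : ℤ} {k m n r' : ℕ} {A : Matrix (Fin m) (Fin n) (RatFunc F)}
    {q : ℕ → ℤ} (hord : HasInfOrders A r' q) (hkr : k ≤ r') (hrm : r' ≤ m) (hrn : r' ≤ n)
    (hq : ∀ a : ℕ, 1 ≤ a → a ≤ k → q a ≤ c) : Wit c k A := by
  obtain ⟨-, B₁, B₂, hb₁, hb₂, heq⟩ := hord
  have hwd := wit_diag (F := F) (c := c) (k := k) (m := m) (n := n) (r' := r') q hkr hrm hrn hq
  rw [← heq] at hwd
  exact wit_absorb hb₁.1 hb₂.1 hwd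

lemma wit_stack {c : ℤ} {k m z n : ℕ} {R : Matrix (Fin m) (Fin n) (RatFunc F)}
    (W : Matrix (Fin z) (Fin n) (RatFunc F)) (h : Wit c k R) : Wit c k (stack R W) := by
  classical
  set proj : Matrix (Fin m) (Fin (m + z)) (RatFunc F) :=
    Matrix.of (fun i l => if (l : ℕ) = (i : ℕ) then 1 else 0) with hproj
  have hprojp : MProper proj := by
    intro i l
    by_cases hh : (l : ℕ) = (i : ℕ) <;> simp [hproj, hh]
    exacts [isProper_one, isProper_zero]
  have hps : proj * stack R W = R := by
    ext i j
    rw [Matrix.mul_apply]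
    rw [Fintype.sum_eq_single (Fin.castAdd z i)]
    · have h1 : ((Fin.castAdd z i : Fin (m + z)) : ℕ) < m := by simp [i.isLt]
      have h2 : stack R W (Fin.castAdd z i) j = R i j := by
        rw [stack, Matrix.of_apply, dif_pos h1]
        congr 1
      rw [h2, hproj]
      simp
    · intro l hl
      have : ¬ ((l : ℕ) = (i : ℕ)) := by
        intro hh
        apply hl
        apply Fin.ext
        simpa using hh
      simp [hproj, this]
  obtain ⟨V, U, hV, hU, hTp, hTdet⟩ := h
  refine ⟨V * proj, U, hV.mul hprojp, hU, ?_, ?_⟩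
  · have : V * proj * stack R W * U = V * R * U := by
      rw [Matrix.mul_assoc V proj, hps]
    rwa [this]
  · have : V * proj * stack R W * U = V * R * U := by
      rw [Matrix.mul_assoc V proj, hps]
    rwa [this]

lemma stack_nil {m n : ℕ} (A : Matrix (Fin m) (Fin n) (RatFunc F)) :
    stack A (0 : Matrix (Fin 0) (Fin n) (RatFunc F)) = A := by
  ext i j
  rw [stack, Matrix.of_apply, dif_pos (by exact i.isLt)]
  rfl

lemma witness_bound' {m n r' k : ℕ} {c : ℤ}
    (A : Matrix (Fin m) (Fin n) (RatFunc F))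
    (q : ℕ → ℤ) (hord : HasInfOrders A r' q) (hw : Wit c k A) :
    k ≤ (Finset.univ.filter (fun l : Fin m => (l : ℕ) < r' ∧ q ((l : ℕ) + 1) ≤ c)).card := by
  have h0 := witness_bound A (0 : Matrix (Fin 0) (Fin n) (RatFunc F)) q hord
    (by rwa [stack_nil])
  simpa using h0

lemma filter_card_lt {m r' i : ℕ} {q : ℕ → ℤ} {c : ℤ}
    (hmono : ∀ j, 1 ≤ j → j < r' → q j ≤ q (j + 1))
    (h1i : 1 ≤ i) (hir : i ≤ r') (hc : c < q i) :
    (Finset.univ.filter (fun l : Fin m => (l : ℕ) < r' ∧ q ((l : ℕ) + 1) ≤ c)).card ≤ i - 1 := by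
  have hmaps : ∀ l ∈ (Finset.univ.filter
      (fun l : Fin m => (l : ℕ) < r' ∧ q ((l : ℕ) + 1) ≤ c)),
      (l : ℕ) ∈ Finset.range (i - 1) := by
    intro l hl
    simp only [Finset.mem_filter, Finset.mem_univ, true_and] at hl
    rw [Finset.mem_range]
    by_contra hge
    push_neg at hge
    have : q i ≤ q ((l : ℕ) + 1) := mono_chain hmono h1i (by omega) (by omega)
    omega
  have hcard := Finset.card_le_card_of_injOn (fun l : Fin m => (l : ℕ)) hmaps
    (fun a _ b _ hab => Fin.ext hab)
  simpa using hcard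


end StmtAux

/-- Interlacing necessity for the invariant orders at infinity under row completion:
q̃_i ≤ p̃_i ≤ q̃_{i+z} for 1 ≤ i ≤ r, with q̃_j = +∞ for j > r + x. -/
theorem stmt18 {F : Type*} [Field F] {m n r z x : ℕ} (hxz : x ≤ z) (hxnr : x ≤ n - r)
    (R : Matrix (Fin m) (Fin n) (RatFunc F)) (hrank : R.rank = r)
    (pt : ℕ → ℤ) (hR : HasInfOrders R r pt)
    (W : Matrix (Fin z) (Fin n) (RatFunc F))
    (hQrank : (stack R W).rank = r + x)
    (qt : ℕ → ℤ) (hQ : HasInfOrders (stack R W) (r + x) qt) :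
    ∀ i, 1 ≤ i → i ≤ r →
      qt i ≤ pt i ∧ (i + z ≤ r + x → pt i ≤ qt (i + z)) := by
  classical
  have hrm : r ≤ m := by
    rw [← hrank]
    simpa using R.rank_le_card_height
  have hrn : r ≤ n := by
    rw [← hrank]
    simpa using R.rank_le_card_width
  have hqm : r + x ≤ m + z := by
    rw [← hQrank]
    simpa using (stack R W).rank_le_card_height
  have hqn : r + x ≤ n := by
    rw [← hQrank]
    simpa using (stack R W).rank_le_card_width
  intro i h1i hir
  constructor
  · -- qt i ≤ pt i
    by_contra hlt
    push_neg at hlt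
    set c := pt i with hc
    have hwR : StmtAux.Wit c i R :=
      StmtAux.wit_of_orders hR hir hrm hrn
        (fun a h1a hai => StmtAux.mono_chain hR.1 h1a hai hir)
    have hwQ : StmtAux.Wit c i (stack R W) := StmtAux.wit_stack W hwR
    have hb := StmtAux.witness_bound' (stack R W) qt hQ hwQ
    have hcard := StmtAux.filter_card_lt (m := m + z) hQ.1 h1i (by omega) hlt
    omega
  · -- pt i ≤ qt (i + z)
    intro hiz
    by_contra hlt
    push_neg at hlt
    set c := qt (i + z) with hc
    have hwQ : StmtAux.Wit c (i + z) (stack R W) :=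
      StmtAux.wit_of_orders hQ hiz hqm hqn
        (fun a h1a hai => StmtAux.mono_chain hQ.1 h1a hai hiz)
    have hb := StmtAux.witness_bound R W pt hR hwQ
    have hcard := StmtAux.filter_card_lt (m := m) hR.1 h1i hir hlt
    omega
end
end
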